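/- (Sampling reconstruction formula.) Let B and D be two orthogonal projectors on ℝ^N with ‖B D^c‖₂ < 1, where D^c := I − D. Let ψ_1, …, ψ_N be an orthonormal basis of ℝ^N consisting of eigenvectors of B·D·B, with B·D·B ψ_i = σ_i² ψ_i. Then every bandlimited signal f (Bf = f) can be reconstructed from its samples Df via f = Σ_{i : σ_i² ≠ 0} (1/σ_i²) ⟨Df, ψ_i⟩ ψ_i, where the sum runs over the indices of the nonzero eigenvalues of B·D·B. -/

import Mathlib

open Matrix

/-- The spectral norm of a real `N × N` matrix: the operator norm of the induced
linear map on `ℝ^N` with the Euclidean norm. -/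
noncomputable def matrixSpectralNorm {N : ℕ} (M : Matrix (Fin N) (Fin N) ℝ) : ℝ :=
  ‖Matrix.toEuclideanCLM (𝕜 := ℝ) M‖

lemma mulVec_norm_le {N : ℕ} (M : Matrix (Fin N) (Fin N) ℝ) (v : Fin N → ℝ) :
    ‖(WithLp.equiv 2 (Fin N → ℝ)).symm (M.mulVec v)‖ ≤
      matrixSpectralNorm M * ‖(WithLp.equiv 2 (Fin N → ℝ)).symm v‖ := by
  have := (Matrix.toEuclideanCLM (𝕜 := ℝ) M).le_opNorm ((WithLp.equiv 2 (Fin N → ℝ)).symm v)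
  exact this

lemma dot_self_eq_sq {N : ℕ} (v : Fin N → ℝ) :
    v ⬝ᵥ v = ‖(WithLp.equiv 2 (Fin N → ℝ)).symm v‖ ^ 2 := by
  rw [← real_inner_self_eq_norm_sq]
  rw [EuclideanSpace.inner_eq_star_dotProduct]
  simp [dotProduct, mul_comm]

lemma dot_shift {N : ℕ} (A : Matrix (Fin N) (Fin N) ℝ) (u v : Fin N → ℝ) :
    A.mulVec u ⬝ᵥ v = u ⬝ᵥ Aᵀ.mulVec v := by
  rw [dotProduct_comm, Matrix.dotProduct_mulVec, ← Matrix.mulVec_transpose, dotProduct_comm]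

/-- **Sampling reconstruction formula (Theorem 4).**
Let `B` and `D` be orthogonal projectors on `ℝ^N` with `‖B D^c‖₂ < 1`, `D^c := I − D`.
Let `ψ 1, …, ψ N` be an orthonormal basis of `ℝ^N` of eigenvectors of `B·D·B`, with
`B·D·B ψ i = σ² i • ψ i`. Then every bandlimited signal `f` (`Bf = f`) is reconstructed
from its samples `Df` via `f = Σ_{i : σ² i ≠ 0} (1/σ² i) ⟨Df, ψ i⟩ ψ i`. -/
theorem sampling_reconstruction_formula
    {N : ℕ} (B D : Matrix (Fin N) (Fin N) ℝ)
    (hBsym : B.transpose = B) (hDsym : D.transpose = D)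
    (hBidem : B * B = B) (hDidem : D * D = D)
    (hnorm : matrixSpectralNorm (B * (1 - D)) < 1)
    (ψ : Fin N → (Fin N → ℝ)) (σsq : Fin N → ℝ)
    (horth : ∀ i j, ψ i ⬝ᵥ ψ j = if i = j then (1 : ℝ) else 0)
    (heig : ∀ i, (B * D * B).mulVec (ψ i) = σsq i • ψ i)
    (f : Fin N → ℝ) (hf : B.mulVec f = f) :
    f = ∑ i ∈ Finset.univ.filter (fun i => σsq i ≠ 0),
          ((D.mulVec f ⬝ᵥ ψ i) / σsq i) • ψ i := by
  classical
  -- The matrix with rows `ψ i`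
  set P : Matrix (Fin N) (Fin N) ℝ := Matrix.of ψ with hP
  have hP1 : P * Pᵀ = 1 := by
    ext i j
    simpa [P, Matrix.mul_apply, Matrix.one_apply, dotProduct] using horth i j
  have hPP : Pᵀ * P = 1 := mul_eq_one_comm.mp hP1
  -- Expansion of `f` in the orthonormal basis
  have hexp : f = ∑ i, (f ⬝ᵥ ψ i) • ψ i := by
    funext a
    have h1 : ((Pᵀ * P).mulVec f) a = f a := by rw [hPP, Matrix.one_mulVec]
    rw [← h1]
    simp only [Matrix.mulVec, Matrix.mul_apply, dotProduct, Finset.sum_apply, Pi.smul_apply,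
      smul_eq_mul, Finset.sum_mul, P, Matrix.transpose_apply, Matrix.of_apply]
    rw [Finset.sum_comm]
    apply Finset.sum_congr rfl
    intro i _
    apply Finset.sum_congr rfl
    intro b _
    ring
  -- For eigenvalue zero, the coefficient vanishes
  have hzero : ∀ i, σsq i = 0 → f ⬝ᵥ ψ i = 0 := by
    intro i h0
    set g : Fin N → ℝ := B.mulVec (ψ i) with hg
    have heig0 : (B * D * B).mulVec (ψ i) = 0 := by rw [heig i, h0, zero_smul]
    -- D g = 0
    have hDg : D.mulVec g = 0 := by
      have hdot : D.mulVec g ⬝ᵥ D.mulVec g = 0 := by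
        have : D.mulVec g = (D * B).mulVec (ψ i) := by
          rw [hg, ← Matrix.mulVec_mulVec]
        rw [this, dot_shift, Matrix.mulVec_mulVec, Matrix.transpose_mul, hDsym, hBsym,
          show B * D * (D * B) = B * D * B by
            rw [mul_assoc, ← mul_assoc D D B, hDidem, ← mul_assoc], heig0]
        simp
      exact dotProduct_self_eq_zero.mp hdot
    -- g is a fixed point of B(1-D)
    have hfix : (B * (1 - D)).mulVec g = g := by
      rw [← Matrix.mulVec_mulVec, Matrix.sub_mulVec, Matrix.one_mulVec, hDg, sub_zero, hg,
        Matrix.mulVec_mulVec, hBidem]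
    -- hence g = 0
    have hg0 : g = 0 := by
      by_contra hne
      have hpos : 0 < ‖(WithLp.equiv 2 (Fin N → ℝ)).symm g‖ := by
        rw [norm_pos_iff]
        simpa using hne
      have := mulVec_norm_le (B * (1 - D)) g
      rw [hfix] at this
      nlinarith [hnorm, hpos]
    have hBψ : Bᵀ.mulVec (ψ i) = 0 := by rw [hBsym]; exact hg0
    rw [← hf, dot_shift, hBψ, dotProduct_zero]
  -- For nonzero eigenvalues, the coefficients agree
  have hcoef : ∀ i, σsq i ≠ 0 → (D.mulVec f ⬝ᵥ ψ i) / σsq i = f ⬝ᵥ ψ i := by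
    intro i hne
    have hBψ : B.mulVec (ψ i) = ψ i := by
      have h1 : B.mulVec ((B * D * B).mulVec (ψ i)) = (B * D * B).mulVec (ψ i) := by
        rw [Matrix.mulVec_mulVec, ← mul_assoc, ← mul_assoc, hBidem]
      rw [heig i, Matrix.mulVec_smul] at h1
      have := smul_right_injective (Fin N → ℝ) hne h1
      exact this
    have key : D.mulVec f ⬝ᵥ ψ i = σsq i * (f ⬝ᵥ ψ i) := by
      have h2 : D.mulVec f = (D * B).mulVec f := by
        rw [← Matrix.mulVec_mulVec, hf]
      calc D.mulVec f ⬝ᵥ ψ i = (D * B).mulVec f ⬝ᵥ B.mulVec (ψ i) := by rw [h2, hBψ]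
        _ = f ⬝ᵥ ((D * B)ᵀ * B).mulVec (ψ i) := by
            rw [dot_shift, Matrix.mulVec_mulVec]
        _ = f ⬝ᵥ (B * D * B).mulVec (ψ i) := by
            rw [Matrix.transpose_mul, hDsym, hBsym, mul_assoc]
        _ = σsq i * (f ⬝ᵥ ψ i) := by rw [heig i, dotProduct_smul, smul_eq_mul]
    rw [key, mul_div_cancel_left₀ _ hne]
  -- Assemble
  conv_lhs => rw [hexp]
  rw [← Finset.sum_filter_add_sum_filter_not Finset.univ (fun i => σsq i ≠ 0)
    (fun i => (f ⬝ᵥ ψ i) • ψ i)]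
  have h1 : ∑ i ∈ Finset.univ.filter (fun i => ¬σsq i ≠ 0), (f ⬝ᵥ ψ i) • ψ i = 0 := by
    apply Finset.sum_eq_zero
    intro i hi
    simp only [Finset.mem_filter, not_not] at hi
    rw [hzero i hi.2, zero_smul]
  rw [h1, add_zero]
  apply Finset.sum_congr rfl
  intro i hi
  simp only [Finset.mem_filter] at hi
  rw [hcoef i hi.2]
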